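/- If u is any nonempty square-free word over the alphabet {0,1,2,3,4} not containing letters 3 or 4, then the word u34 is square-free, and for β = 0^{|u|+1} 1^{|u|} 0 1 1 the shuffle (u34) ⧢_β (u34) equals u3u434, which is square-free. -/

import Mathlib

def SqFreeWord {α : Type*} (w : List α) : Prop :=
  ∀ x : List α, x ≠ [] → ¬ (x ++ x) <:+: w

def condShuffle {α : Type*} : List Bool → List α → List α → List α
  | [], _, _ => []
  | (false :: β), (a :: u), v => a :: condShuffle β u v
  | (false :: _), [], _ => []
  | (true :: β), u, (a :: v) => a :: condShuffle β u v
  | (true :: _), _, [] => []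

lemma shuf_false {α : Type*} (u1 : List α) (β : List Bool) (u2 v : List α) :
    condShuffle (List.replicate u1.length false ++ β) (u1 ++ u2) v
      = u1 ++ condShuffle β u2 v := by
  induction u1 with
  | nil => rfl
  | cons a u1 ih => simp [condShuffle, List.replicate_succ, ih]

lemma shuf_true {α : Type*} (v1 : List α) (β : List Bool) (u v2 : List α) :
    condShuffle (List.replicate v1.length true ++ β) u (v1 ++ v2)
      = v1 ++ condShuffle β u v2 := by
  induction v1 with
  | nil => rfl
  | cons a v1 ih => simp [condShuffle, List.replicate_succ, ih]

lemma shuffle_eq (u : List (Fin 5)) :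
    condShuffle (List.replicate (u.length + 1) false ++ List.replicate u.length true
        ++ [false, true, true]) (u ++ [3, 4]) (u ++ [3, 4])
      = u ++ [3] ++ u ++ [4, 3, 4] := by
  have h1 : List.replicate (u.length + 1) false
      = List.replicate (u ++ [(3:Fin 5)]).length false := by simp
  rw [List.append_assoc, h1]
  conv_lhs => rw [show (u ++ [(3:Fin 5),4]) = (u ++ [3]) ++ [4] from by simp]
  rw [shuf_false, List.append_assoc u [(3:Fin 5)] [4], shuf_true u _ [4] ([3] ++ [4])]
  simp [condShuffle]

lemma infix_of_eq_append_left {α : Type*} {s y t a b : List α}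
    (h : s ++ (y ++ t) = a ++ b) (hl : s.length + y.length ≤ a.length) :
    y <:+: a := by
  have hr : (s ++ y) ++ t = a ++ b := by rw [List.append_assoc]; exact h
  have h1 : s ++ y = (a ++ b).take (s.length + y.length) := by
    rw [← hr, List.take_left' (by simp)]
  rw [List.take_append_of_le_length hl] at h1
  exact ⟨s, a.drop (s.length + y.length),
    by rw [h1]; exact List.take_append_drop _ _⟩

lemma eq_append_right' {α : Type*} {s y t a b : List α}
    (h : s ++ (y ++ t) = a ++ b) (hl : a.length ≤ s.length) :
    s.drop a.length ++ (y ++ t) = b := by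
  have h2 := congrArg (List.drop a.length) h
  rwa [List.drop_append_of_le_length hl, List.drop_left] at h2

lemma sq_getElem {α : Type*} {x s t w : List α} (h : s ++ ((x ++ x) ++ t) = w)
    {i : ℕ} (hi : i < x.length) :
    w[s.length + i]? = w[s.length + x.length + i]? := by
  subst h
  have e1 : ((x ++ x) ++ t)[i]? = x[i]? := by
    rw [List.getElem?_append_left (by simp; omega), List.getElem?_append_left hi]
  have e2 : ((x ++ x) ++ t)[x.length + i]? = x[i]? := by
    rw [List.getElem?_append_left (by simp; omega),
      List.getElem?_append_right (Nat.le_add_right _ _), Nat.add_sub_cancel_left]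
  rw [List.getElem?_append_right (Nat.le_add_right _ _),
    Nat.add_sub_cancel_left, e1,
    List.getElem?_append_right (by omega),
    show s.length + x.length + i - s.length = x.length + i from by omega, e2]

lemma main1 (u : List (Fin 5)) (hsf : SqFreeWord u)
    (hsub : ∀ a ∈ u, a.val < 3) : SqFreeWord (u ++ [3, 4]) := by
  intro x hxne hinf
  set n := u.length with hn
  obtain ⟨s, t, hst⟩ := hinf
  rw [List.append_assoc] at hst
  set k := x.length with hk
  set p := s.length with hp
  have hk1 : 1 ≤ k := List.length_pos_iff.mpr hxne
  have hlen : p + 2*k + t.length = n + 2 := by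
    have := congrArg List.length hst
    simp at this; omega
  have hsq : ∀ i, i < k → (u ++ [(3:Fin 5),4])[p+i]? = (u ++ [(3:Fin 5),4])[p+k+i]? :=
    fun i hi => sq_getElem hst hi
  have hv3 : (u ++ [(3:Fin 5),4])[n]? = some 3 := by
    rw [List.getElem?_append_right (le_refl _)]; simp
  have hv4 : (u ++ [(3:Fin 5),4])[n+1]? = some 4 := by
    rw [List.getElem?_append_right (by omega)]
    rw [show n + 1 - n = 1 from by omega]; simp
  have hcls : ∀ i, i < n → ∃ c : Fin 5, (u ++ [(3:Fin 5),4])[i]? = some c ∧ c.val < 3 := by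
    intro i hi
    refine ⟨u[i], ?_, hsub _ (u.getElem_mem hi)⟩
    rw [List.getElem?_append_left hi, List.getElem?_eq_getElem hi]
  have heq3 : ∀ i, i < n + 2 → (u ++ [(3:Fin 5),4])[i]? = some 3 → i = n := by
    intro i hi hv
    by_contra hne2
    rcases Nat.lt_or_ge i n with h | h
    · obtain ⟨c, hc, hc3⟩ := hcls i h
      rw [hc] at hv
      have : c = 3 := Option.some.inj hv
      subst this; exact absurd hc3 (by decide)
    · have : i = n + 1 := by omega
      subst this; rw [hv4] at hv
      exact absurd (Option.some.inj hv) (by decide)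
  have heq4 : ∀ i, i < n + 2 → (u ++ [(3:Fin 5),4])[i]? = some 4 → i = n + 1 := by
    intro i hi hv
    by_contra hne2
    rcases Nat.lt_or_ge i n with h | h
    · obtain ⟨c, hc, hc3⟩ := hcls i h
      rw [hc] at hv
      have : c = 4 := Option.some.inj hv
      subst this; exact absurd hc3 (by decide)
    · have : i = n := by omega
      subst this; rw [hv3] at hv
      exact absurd (Option.some.inj hv) (by decide)
  have h3 : ∀ j, j < k → (u ++ [(3:Fin 5),4])[p+j]? ≠ some 3 := by
    intro j hj hv
    have hv' : (u ++ [(3:Fin 5),4])[p+k+j]? = some 3 := by rw [← hsq j hj]; exact hv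
    have e1 := heq3 _ (by omega) hv
    have e2 := heq3 _ (by omega) hv'
    omega
  have h4 : ∀ j, j < k → (u ++ [(3:Fin 5),4])[p+j]? ≠ some 4 := by
    intro j hj hv
    have hv' : (u ++ [(3:Fin 5),4])[p+k+j]? = some 4 := by rw [← hsq j hj]; exact hv
    have e1 := heq4 _ (by omega) hv
    have e2 := heq4 _ (by omega) hv'
    omega
  have key : ∀ (m : ℕ) (c : Fin 5), (u ++ [(3:Fin 5),4])[m]? = some c →
      (∀ j, j < k → (u ++ [(3:Fin 5),4])[p+j]? ≠ some c) →
      ¬(p ≤ m ∧ m < p + 2*k) := by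
    rintro m c hm hno ⟨ha, hb⟩
    by_cases hik : m - p < k
    · exact hno _ hik (by rw [show p + (m-p) = m from by omega]; exact hm)
    · have h2 : m - p - k < k := by omega
      apply hno _ h2
      rw [hsq _ h2, show p + k + (m-p-k) = m from by omega]; exact hm
  have hexn := key n 3 hv3 h3
  have hex1 := key (n+1) 4 hv4 h4
  have hcase : p + 2*k ≤ n := by omega
  exact hsf x hxne (infix_of_eq_append_left hst (by simp; omega))

lemma main3 (u : List (Fin 5)) (hne : u ≠ []) (hsf : SqFreeWord u)
    (hsub : ∀ a ∈ u, a.val < 3) :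
    SqFreeWord (u ++ [3] ++ u ++ [4, 3, 4]) := by
  have hn1 : 1 ≤ u.length := List.length_pos_iff.mpr hne
  -- position facts about the canonical form W = u ++ ([3] ++ (u ++ [4,3,4]))
  have hv3 : (u ++ ([3] ++ (u ++ [(4:Fin 5),3,4])))[u.length]? = some 3 := by
    rw [List.getElem?_append_right (le_refl _), Nat.sub_self]; simp
  have hvA : ∀ i, i < u.length →
      (u ++ ([3] ++ (u ++ [(4:Fin 5),3,4])))[i]? = u[i]? := by
    intro i hi
    rw [List.getElem?_append_left hi]
  have hvmid : ∀ j, j < u.length →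
      (u ++ ([3] ++ (u ++ [(4:Fin 5),3,4])))[u.length+1+j]? = u[j]? := by
    intro j hj
    rw [List.getElem?_append_right (by omega),
      show u.length+1+j - u.length = j+1 from by omega]
    show ((3:Fin 5) :: (u ++ [4,3,4]))[j+1]? = u[j]?
    rw [List.getElem?_cons_succ, List.getElem?_append_left hj]
  have hv4a : (u ++ ([3] ++ (u ++ [(4:Fin 5),3,4])))[2*u.length+1]? = some 4 := by
    rw [List.getElem?_append_right (by omega),
      show 2*u.length+1 - u.length = u.length+1 from by omega]
    show ((3:Fin 5) :: (u ++ [4,3,4]))[u.length+1]? = some 4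
    rw [List.getElem?_cons_succ, List.getElem?_append_right (le_refl _), Nat.sub_self]; simp
  have hv3b : (u ++ ([3] ++ (u ++ [(4:Fin 5),3,4])))[2*u.length+2]? = some 3 := by
    rw [List.getElem?_append_right (by omega),
      show 2*u.length+2 - u.length = (u.length+1)+1 from by omega]
    show ((3:Fin 5) :: (u ++ [4,3,4]))[(u.length+1)+1]? = some 3
    rw [List.getElem?_cons_succ, List.getElem?_append_right (by omega),
      show u.length+1 - u.length = 1 from by omega]; simp
  have hv4b : (u ++ ([3] ++ (u ++ [(4:Fin 5),3,4])))[2*u.length+3]? = some 4 := by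
    rw [List.getElem?_append_right (by omega),
      show 2*u.length+3 - u.length = (u.length+2)+1 from by omega]
    show ((3:Fin 5) :: (u ++ [4,3,4]))[(u.length+2)+1]? = some 4
    rw [List.getElem?_cons_succ, List.getElem?_append_right (by omega),
      show u.length+2 - u.length = 2 from by omega]; simp
  have hcls : ∀ i, i < 2*u.length+4 → i ≠ u.length → i ≠ 2*u.length+1 →
      i ≠ 2*u.length+2 → i ≠ 2*u.length+3 →
      ∃ c : Fin 5, (u ++ ([3] ++ (u ++ [(4:Fin 5),3,4])))[i]? = some c ∧ c.val < 3 := by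
    intro i hi h1 h2 h3 h4
    by_cases hin : i < u.length
    · refine ⟨u[i], ?_, hsub _ (u.getElem_mem hin)⟩
      rw [hvA i hin, List.getElem?_eq_getElem hin]
    · have hj : ∃ j, j < u.length ∧ i = u.length+1+j := ⟨i - (u.length+1), by omega⟩
      obtain ⟨j, hjn, rfl⟩ := hj
      refine ⟨u[j], ?_, hsub _ (u.getElem_mem hjn)⟩
      rw [hvmid j hjn, List.getElem?_eq_getElem hjn]
  have heq3 : ∀ i, i < 2*u.length+4 →
      (u ++ ([3] ++ (u ++ [(4:Fin 5),3,4])))[i]? = some 3 →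
      i = u.length ∨ i = 2*u.length+2 := by
    intro i hi hv
    by_contra hcon
    push_neg at hcon
    by_cases hc1 : i = 2*u.length+1
    · subst hc1; rw [hv4a] at hv; exact absurd (Option.some.inj hv) (by decide)
    by_cases hc2 : i = 2*u.length+3
    · subst hc2; rw [hv4b] at hv; exact absurd (Option.some.inj hv) (by decide)
    obtain ⟨c, hc, hcv⟩ := hcls i hi hcon.1 hc1 hcon.2 hc2
    rw [hc] at hv
    have : c = 3 := Option.some.inj hv
    subst this; exact absurd hcv (by decide)
  have heq4 : ∀ i, i < 2*u.length+4 →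
      (u ++ ([3] ++ (u ++ [(4:Fin 5),3,4])))[i]? = some 4 →
      i = 2*u.length+1 ∨ i = 2*u.length+3 := by
    intro i hi hv
    by_contra hcon
    push_neg at hcon
    by_cases hc1 : i = u.length
    · subst hc1; rw [hv3] at hv; exact absurd (Option.some.inj hv) (by decide)
    by_cases hc2 : i = 2*u.length+2
    · subst hc2; rw [hv3b] at hv; exact absurd (Option.some.inj hv) (by decide)
    obtain ⟨c, hc, hcv⟩ := hcls i hi hc1 hcon.1 hc2 hcon.2
    rw [hc] at hv
    have : c = 4 := Option.some.inj hv
    subst this; exact absurd hcv (by decide)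
  -- main argument
  intro x hxne hinf
  obtain ⟨s, t, hst⟩ := hinf
  have hst' : s ++ ((x ++ x) ++ t) = u ++ ([3] ++ (u ++ [(4:Fin 5),3,4])) := by
    rw [← List.append_assoc, hst]; simp
  have hk1 : 1 ≤ x.length := List.length_pos_iff.mpr hxne
  have hlen : s.length + 2*x.length + t.length = 2*u.length + 4 := by
    have := congrArg List.length hst'
    simp at this; omega
  have hsq : ∀ i, i < x.length →
      (u ++ ([3] ++ (u ++ [(4:Fin 5),3,4])))[s.length+i]?
        = (u ++ ([3] ++ (u ++ [(4:Fin 5),3,4])))[s.length+x.length+i]? :=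
    fun i hi => hst' ▸ sq_getElem hst' hi
  have h4 : ∀ j, j < x.length →
      (u ++ ([3] ++ (u ++ [(4:Fin 5),3,4])))[s.length+j]? ≠ some 4 := by
    intro j hj hv
    have hv' : (u ++ ([3] ++ (u ++ [(4:Fin 5),3,4])))[s.length+x.length+j]? = some 4 := by
      rw [← hsq j hj]; exact hv
    have e1 := heq4 _ (by omega) hv
    have e2 := heq4 _ (by omega) hv'
    have hp : s.length = 2*u.length ∧ x.length = 2 := by omega
    have h0 := hsq 0 (by omega)
    rw [hp.1, hp.2] at h0
    have h0' : (u ++ ([3] ++ (u ++ [(4:Fin 5),3,4])))[2*u.length]? = some 3 := by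
      rw [show 2*u.length = 2*u.length+0 from rfl, h0,
        show 2*u.length+2+0 = 2*u.length+2 from rfl]
      exact hv3b
    have := heq3 _ (by omega) h0'
    omega
  have h3 : ∀ j, j < x.length →
      (u ++ ([3] ++ (u ++ [(4:Fin 5),3,4])))[s.length+j]? ≠ some 3 := by
    intro j hj hv
    have hv' : (u ++ ([3] ++ (u ++ [(4:Fin 5),3,4])))[s.length+x.length+j]? = some 3 := by
      rw [← hsq j hj]; exact hv
    have e1 := heq3 _ (by omega) hv
    have e2 := heq3 _ (by omega) hv'
    have hp : s.length = 0 ∧ x.length = u.length + 2 := by omega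
    have h5 := hsq (u.length+1) (by omega)
    rw [hp.1, hp.2] at h5
    apply h4 (u.length+1) (by omega)
    rw [hp.1, show 0 + (u.length+1) = u.length+1 from by omega]
    rw [show (0:ℕ) + (u.length+1) = u.length+1 from by omega] at h5
    rw [h5, show 0 + (u.length+2) + (u.length+1) = 2*u.length+3 from by omega]
    exact hv4b
  have key : ∀ (m : ℕ) (c : Fin 5),
      (u ++ ([3] ++ (u ++ [(4:Fin 5),3,4])))[m]? = some c →
      (∀ j, j < x.length →
        (u ++ ([3] ++ (u ++ [(4:Fin 5),3,4])))[s.length+j]? ≠ some c) →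
      ¬(s.length ≤ m ∧ m < s.length + 2*x.length) := by
    rintro m c hm hno ⟨ha, hb⟩
    by_cases hik : m - s.length < x.length
    · exact hno _ hik (by rw [show s.length + (m - s.length) = m from by omega]; exact hm)
    · have h2 : m - s.length - x.length < x.length := by omega
      apply hno _ h2
      rw [hsq _ h2, show s.length + x.length + (m - s.length - x.length) = m from by omega]
      exact hm
  have hexn := key u.length 3 hv3 h3
  have hex1 := key (2*u.length+1) 4 hv4a h4
  have hex2 := key (2*u.length+2) 3 hv3b h3
  have hex3 := key (2*u.length+3) 4 hv4b h4
  have hcase : s.length + 2*x.length ≤ u.length ∨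
      (u.length + 1 ≤ s.length ∧ s.length + 2*x.length ≤ 2*u.length+1) := by omega
  rcases hcase with hc | ⟨hc1, hc2⟩
  · exact hsf x hxne (infix_of_eq_append_left hst' (by simp; omega))
  · have hst2 : s ++ ((x ++ x) ++ t) = (u ++ [3]) ++ (u ++ [(4:Fin 5),3,4]) := by
      rw [hst']; simp
    have hdrop := eq_append_right' hst2 (by simp; omega)
    apply hsf x hxne
    exact infix_of_eq_append_left hdrop (by simp; omega)

theorem stmt3 (u : List (Fin 5)) (hne : u ≠ []) (hsf : SqFreeWord u)
    (hsub : ∀ a ∈ u, a.val < 3) :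
    SqFreeWord (u ++ [3, 4]) ∧
    condShuffle (List.replicate (u.length + 1) false ++ List.replicate u.length true
        ++ [false, true, true]) (u ++ [3, 4]) (u ++ [3, 4])
      = u ++ [3] ++ u ++ [4, 3, 4] ∧
    SqFreeWord (u ++ [3] ++ u ++ [4, 3, 4]) :=
  ⟨main1 u hsf hsub, shuffle_eq u, main3 u hne hsf hsub⟩
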